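/- Let X_1, X_2, ... be i.i.d. with distribution function F whose survival function F̄ is regularly varying of index -α, α > 0. Let a_n = F^{←}(1 - 1/n), X_{(n)} = max_{i≤n} X_i, and Z_n = (X_{(n)}/a_n)^{α/log n}. Then for every x ≥ 1, limsup_{n→∞} (1/log n) log P(Z_n > x) ≤ -log x. -/

import Mathlib

open Filter MeasureTheory ProbabilityTheory

section PotterHelpers
open Real

lemma floor_log2_bounds {r : ℝ} (hr1 : 1 ≤ r) :
    (2:ℝ) ^ (⌊Real.logb 2 r⌋.toNat) ≤ r ∧ r < 2 * 2 ^ (⌊Real.logb 2 r⌋.toNat) := by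
  have h2 : (0:ℝ) < 2 := by norm_num
  have hr0 : 0 < r := lt_of_lt_of_le one_pos hr1
  have hlogb0 : 0 ≤ logb 2 r := logb_nonneg one_lt_two hr1
  set k : ℕ := ⌊logb 2 r⌋.toNat with hk
  have hcast : ((k:ℕ):ℝ) = ((⌊logb 2 r⌋ : ℤ) : ℝ) := by
    have h' : ((k:ℕ):ℤ) = ⌊logb 2 r⌋ := Int.toNat_of_nonneg (Int.floor_nonneg.2 hlogb0)
    exact_mod_cast congrArg (fun z : ℤ => (z : ℝ)) h'
  have hkfloor : (k : ℝ) ≤ logb 2 r := by rw [hcast]; exact Int.floor_le _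
  have hkfloor2 : logb 2 r < (k:ℝ) + 1 := by rw [hcast]; exact Int.lt_floor_add_one _
  constructor
  · calc (2:ℝ) ^ k = (2:ℝ) ^ (k:ℝ) := (rpow_natCast 2 k).symm
      _ ≤ (2:ℝ) ^ logb 2 r := rpow_le_rpow_of_exponent_le one_le_two hkfloor
      _ = r := rpow_logb h2 (by norm_num) hr0
  · calc r = (2:ℝ) ^ logb 2 r := (rpow_logb h2 (by norm_num) hr0).symm
      _ < (2:ℝ) ^ ((k:ℝ) + 1) := rpow_lt_rpow_of_exponent_lt one_lt_two hkfloor2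
      _ = 2 * 2 ^ k := by rw [rpow_add h2, rpow_one, rpow_natCast]; ring

lemma potter_iter_upper (G : ℝ → ℝ) (S γ : ℝ) (hS : 0 < S) (hγ : 0 ≤ γ)
    (hanti : ∀ ⦃s t : ℝ⦄, s ≤ t → G t ≤ G s)
    (hnn : ∀ u : ℝ, 0 ≤ G u)
    (hstep : ∀ u, S ≤ u → G (2 * u) ≤ 2 ^ (-γ) * G u) :
    ∀ s t : ℝ, S ≤ s → s ≤ t → G t ≤ 2 ^ γ * ((t / s) ^ (-γ) * G s) := by
  have h2 : (0:ℝ) < 2 := by norm_num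
  have key : ∀ (k : ℕ) (u : ℝ), S ≤ u → G (2 ^ k * u) ≤ (2:ℝ) ^ (-(γ * k)) * G u := by
    intro k
    induction k with
    | zero => intro u hu; simp
    | succ k ih =>
      intro u hu
      have hu0 : 0 < u := hS.trans_le hu
      have h2k : S ≤ 2 ^ k * u := le_trans hu (le_mul_of_one_le_left hu0.le (one_le_pow₀ one_le_two))
      have e1 : (2:ℝ) ^ (k+1) * u = 2 * (2 ^ k * u) := by ring
      calc G (2 ^ (k+1) * u) = G (2 * (2 ^ k * u)) := by rw [e1]
        _ ≤ 2 ^ (-γ) * G (2 ^ k * u) := hstep _ h2k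
        _ ≤ 2 ^ (-γ) * ((2:ℝ) ^ (-(γ * k)) * G u) :=
            mul_le_mul_of_nonneg_left (ih u hu) (rpow_pos_of_pos h2 _).le
        _ = (2:ℝ) ^ (-(γ * (k+1:ℕ))) * G u := by
            rw [← mul_assoc, ← rpow_add h2]
            push_cast
            ring_nf
  intro s t hSs hst
  have hs0 : 0 < s := hS.trans_le hSs
  have ht0 : 0 < t := hs0.trans_le hst
  have hr1 : 1 ≤ t / s := (one_le_div hs0).2 hst
  have hr0 : 0 < t / s := lt_of_lt_of_le one_pos hr1
  set r := t / s with hrdef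
  obtain ⟨h2k_le, h2k_ge⟩ := floor_log2_bounds hr1
  set k : ℕ := ⌊logb 2 r⌋.toNat with hk
  have hGt : G t ≤ (2:ℝ) ^ (-(γ * k)) * G s := by
    have h1 : (2:ℝ) ^ k * s ≤ t := by
      rw [← le_div_iff₀ hs0]; exact h2k_le
    exact le_trans (hanti h1) (key k s hSs)
  have hpow : (2:ℝ) ^ (-(γ * k)) ≤ 2 ^ γ * r ^ (-γ) := by
    have e : (2:ℝ) ^ (-(γ * k)) = ((2:ℝ) ^ k) ^ (-γ) := by
      rw [← rpow_natCast 2 k, ← rpow_mul h2.le]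
      ring_nf
    rw [e]
    have hhalf : r / 2 ≤ (2:ℝ) ^ k := by linarith
    calc ((2:ℝ) ^ k) ^ (-γ) ≤ (r / 2) ^ (-γ) :=
          rpow_le_rpow_of_nonpos (by linarith) hhalf (neg_nonpos.2 hγ)
      _ = 2 ^ γ * r ^ (-γ) := by
          rw [div_rpow hr0.le h2.le, rpow_neg h2.le γ, div_eq_mul_inv, inv_inv]
          ring
  calc G t ≤ (2:ℝ) ^ (-(γ * k)) * G s := hGt
    _ ≤ (2 ^ γ * r ^ (-γ)) * G s := mul_le_mul_of_nonneg_right hpow (hnn s)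
    _ = 2 ^ γ * (r ^ (-γ) * G s) := by ring

lemma potter_iter_lower (G : ℝ → ℝ) (S γ : ℝ) (hS : 0 < S) (hγ : 0 ≤ γ)
    (hanti : ∀ ⦃s t : ℝ⦄, s ≤ t → G t ≤ G s)
    (hnn : ∀ u : ℝ, 0 ≤ G u)
    (hstep : ∀ u, S ≤ u → 2 ^ (-γ) * G u ≤ G (2 * u)) :
    ∀ t : ℝ, S ≤ t → 2 ^ (-γ) * ((t / S) ^ (-γ) * G S) ≤ G t := by
  have h2 : (0:ℝ) < 2 := by norm_num
  have key : ∀ (k : ℕ), (2:ℝ) ^ (-(γ * k)) * G S ≤ G (2 ^ k * S) := by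
    intro k
    induction k with
    | zero => norm_num
    | succ k ih =>
      have h2k : S ≤ 2 ^ k * S := le_mul_of_one_le_left hS.le (one_le_pow₀ one_le_two)
      have e1 : (2:ℝ) ^ (k+1) * S = 2 * (2 ^ k * S) := by ring
      rw [e1]
      calc (2:ℝ) ^ (-(γ * (k+1:ℕ))) * G S = 2 ^ (-γ) * ((2:ℝ) ^ (-(γ * k)) * G S) := by
            rw [← mul_assoc, ← rpow_add h2]; push_cast; ring_nf
        _ ≤ 2 ^ (-γ) * G (2 ^ k * S) :=
            mul_le_mul_of_nonneg_left ih (rpow_pos_of_pos h2 _).le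
        _ ≤ G (2 * (2 ^ k * S)) := hstep _ h2k
  intro t hSt
  have hr1 : 1 ≤ t / S := (one_le_div hS).2 hSt
  have hr0 : 0 < t / S := lt_of_lt_of_le one_pos hr1
  set r := t / S with hrdef
  obtain ⟨h2k_le, h2k_ge⟩ := floor_log2_bounds hr1
  set k : ℕ := ⌊logb 2 r⌋.toNat with hk
  have ht_le : t ≤ 2 ^ (k+1) * S := by
    have h' : r < 2 ^ (k+1) := by rw [pow_succ]; nlinarith
    calc t = r * S := by rw [hrdef]; field_simp
      _ ≤ 2 ^ (k+1) * S := by nlinarith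
  have hGt : G (2 ^ (k+1) * S) ≤ G t := hanti ht_le
  have hpow : 2 ^ (-γ) * r ^ (-γ) ≤ (2:ℝ) ^ (-(γ * (k+1:ℕ))) := by
    have e : (2:ℝ) ^ (-(γ * (k+1:ℕ))) = 2 ^ (-γ) * ((2:ℝ) ^ k) ^ (-γ) := by
      rw [← rpow_natCast 2 k, ← rpow_mul h2.le, ← rpow_add h2]
      push_cast; ring_nf
    rw [e]
    have h' : r ^ (-γ) ≤ ((2:ℝ) ^ k) ^ (-γ) :=
      rpow_le_rpow_of_nonpos (pow_pos h2 k) h2k_le (neg_nonpos.2 hγ)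
    exact mul_le_mul_of_nonneg_left h' (rpow_pos_of_pos h2 _).le
  calc 2 ^ (-γ) * (r ^ (-γ) * G S) = (2 ^ (-γ) * r ^ (-γ)) * G S := by ring
    _ ≤ (2:ℝ) ^ (-(γ * (k+1:ℕ))) * G S := mul_le_mul_of_nonneg_right hpow (hnn S)
    _ ≤ G (2 ^ (k+1) * S) := key (k+1)
    _ ≤ G t := hGt

lemma log_le_two_sqrt {y : ℝ} (hy : 1 ≤ y) : Real.log y ≤ 2 * Real.sqrt y := by
  have hy0 : 0 < y := lt_of_lt_of_le one_pos hy
  have hs : 0 < Real.sqrt y := Real.sqrt_pos.2 hy0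
  have h1 : Real.log (Real.sqrt y) ≤ Real.sqrt y - 1 := Real.log_le_sub_one_of_pos hs
  have h2 : Real.log y = 2 * Real.log (Real.sqrt y) := by rw [Real.log_sqrt hy0.le]; ring
  nlinarith

end PotterHelpers

set_option maxHeartbeats 3200000 in
theorem stmt_6 {Ω : Type*} [MeasurableSpace Ω] (μ : Measure Ω) [IsProbabilityMeasure μ]
    (X : ℕ → Ω → ℝ) (hX_meas : ∀ i, Measurable (X i))
    (hX_indep : iIndepFun X μ)
    (hX_ident : ∀ i, IdentDistrib (X i) (X 0) μ μ)
    (L : ℝ → ℝ) (α : ℝ) (hα : 0 < α)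
    (hL_pos : ∀ x > (0 : ℝ), 0 < L x)
    (hL_slow : ∀ t > (0 : ℝ), Tendsto (fun x => L (t * x) / L x) atTop (nhds 1))
    (F : ℝ → ℝ) (hF : ∀ x, F x = (μ {ω | X 0 ω ≤ x}).toReal)
    (hFbar : ∀ x > (0 : ℝ), 1 - F x = x ^ (-α) * L x)
    (a : ℕ → ℝ) (ha : ∀ n, a n = sInf {x : ℝ | 1 - 1 / (n : ℝ) ≤ F x})
    (Z : ℕ → Ω → ℝ)
    (hZ : ∀ n ω, Z n ω = ((⨆ i : Fin n, X i ω) / a n) ^ (α / Real.log n)) :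
    ∀ x ≥ (1 : ℝ),
      limsup (fun n : ℕ => Real.log (μ {ω | x < Z n ω}).toReal / Real.log n) atTop
        ≤ -Real.log x := by
  intro x hx

  have hFmono : Monotone F := by
    intro u v huv
    rw [hF, hF]
    exact ENNReal.toReal_mono (measure_ne_top μ _)
      (measure_mono (fun ω hω => le_trans hω huv))
  have hFnn : ∀ y, 0 ≤ F y := fun y => by rw [hF]; exact ENNReal.toReal_nonneg
  have hFle1 : ∀ y, F y ≤ 1 := by
    intro y
    rw [hF]
    have h1 := ENNReal.toReal_mono (a := μ {ω | X 0 ω ≤ y}) ENNReal.one_ne_top prob_le_one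
    simpa using h1
  have hGnn : ∀ y, 0 ≤ 1 - F y := fun y => by linarith [hFle1 y]
  have hGanti : ∀ ⦃s t : ℝ⦄, s ≤ t → 1 - F t ≤ 1 - F s := fun s t hst => by
    linarith [hFmono hst]
  have hGpos : ∀ y : ℝ, 0 < y → 0 < 1 - F y := by
    intro y hy
    rw [hFbar y hy]
    exact mul_pos (Real.rpow_pos_of_pos hy _) (hL_pos y hy)
  have hFlt1 : ∀ y, F y < 1 := by
    intro y
    have h1 : F y ≤ F (max y 1) := hFmono (le_max_left _ _)
    have h2 := hGpos (max y 1) (lt_of_lt_of_le one_pos (le_max_right _ _))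
    linarith
  have ratio2 : Tendsto (fun u => (1 - F (2*u)) / (1 - F u)) atTop
      (nhds ((2:ℝ) ^ (-α))) := by
    have h := (hL_slow 2 two_pos).const_mul ((2:ℝ)^(-α))
    rw [mul_one] at h
    refine Tendsto.congr' ?_ h
    filter_upwards [eventually_gt_atTop (0:ℝ)] with u hu
    have h2u : (0:ℝ) < 2 * u := by linarith
    rw [hFbar _ h2u, hFbar _ hu, Real.mul_rpow (by norm_num) hu.le]
    have hu1 : (u:ℝ) ^ (-α) ≠ 0 := (Real.rpow_pos_of_pos hu _).ne'
    have hu2 : L u ≠ 0 := (hL_pos u hu).ne'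
    field_simp
  have potterU : ∀ δ : ℝ, 0 < δ → δ < α → ∃ S : ℝ, 1 ≤ S ∧ ∀ s t : ℝ, S ≤ s → s ≤ t →
      1 - F t ≤ 2 ^ (α - δ) * ((t/s) ^ (-(α - δ)) * (1 - F s)) := by
    intro δ hδ hδα
    have hlt : (2:ℝ)^(-α) < 2^(-(α - δ)) :=
      Real.rpow_lt_rpow_of_exponent_lt one_lt_two (by linarith)
    have hev := ratio2.eventually_lt_const hlt
    rw [eventually_atTop] at hev
    obtain ⟨S₀, hS₀⟩ := hev
    refine ⟨max S₀ 1, le_max_right _ _, ?_⟩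
    have hSpos : (0:ℝ) < max S₀ 1 := lt_of_lt_of_le one_pos (le_max_right _ _)
    refine potter_iter_upper (fun y => 1 - F y) (max S₀ 1) (α - δ) hSpos (by linarith)
      hGanti hGnn ?_
    intro u hu
    have hupos : 0 < u := lt_of_lt_of_le hSpos hu
    have h1 := hS₀ u (le_trans (le_max_left _ _) hu)
    have h2 := hGpos u hupos
    rw [div_lt_iff₀ h2] at h1
    show (1:ℝ) - F (2*u) ≤ 2 ^ (-(α - δ)) * (1 - F u)
    linarith
  have potterL : ∃ S : ℝ, 1 ≤ S ∧ ∀ t : ℝ, S ≤ t →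
      2 ^ (-(α+1)) * ((t/S) ^ (-(α+1)) * (1 - F S)) ≤ 1 - F t := by
    have hlt : (2:ℝ)^(-(α+1)) < 2^(-α) :=
      Real.rpow_lt_rpow_of_exponent_lt one_lt_two (by linarith)
    have hev := ratio2.eventually_const_lt hlt
    rw [eventually_atTop] at hev
    obtain ⟨S₀, hS₀⟩ := hev
    refine ⟨max S₀ 1, le_max_right _ _, ?_⟩
    have hSpos : (0:ℝ) < max S₀ 1 := lt_of_lt_of_le one_pos (le_max_right _ _)
    refine potter_iter_lower (fun y => 1 - F y) (max S₀ 1) (α + 1) hSpos (by linarith)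
      hGanti hGnn ?_
    intro u hu
    have hupos : 0 < u := lt_of_lt_of_le hSpos hu
    have h1 := hS₀ u (le_trans (le_max_left _ _) hu)
    have h2 := hGpos u hupos
    rw [lt_div_iff₀ h2] at h1
    show (2:ℝ) ^ (-(α+1)) * (1 - F u) ≤ 1 - F (2*u)
    linarith
  have hGtend : Tendsto (fun y => 1 - F y) atTop (nhds 0) := by
    obtain ⟨S, hS1, hpot⟩ := potterU (α/2) (by linarith) (by linarith)
    have hSpos : (0:ℝ) < S := lt_of_lt_of_le one_pos hS1
    have hup : Tendsto (fun t : ℝ => 2 ^ (α - α/2) * ((t/S) ^ (-(α - α/2)) * (1 - F S)))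
        atTop (nhds 0) := by
      have h1 : Tendsto (fun t : ℝ => t / S) atTop atTop :=
        tendsto_id.atTop_div_const hSpos
      have h2 : Tendsto (fun u : ℝ => u ^ (-(α - α/2))) atTop (nhds 0) := by
        have := tendsto_rpow_neg_atTop (y := α - α/2) (by linarith)
        simpa using this
      have h3 := ((h2.comp h1).mul_const (1 - F S)).const_mul ((2:ℝ) ^ (α - α/2))
      simpa using h3
    refine tendsto_of_tendsto_of_tendsto_of_le_of_le' tendsto_const_nhds hup ?_ ?_
    · exact Eventually.of_forall (fun y => hGnn y)
    · filter_upwards [eventually_ge_atTop S] with t ht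
      exact hpot S t le_rfl ht

  -- chunk 2 : facts about a n
  have hanonempty : ∀ n : ℕ, 1 ≤ n → {y : ℝ | 1 - 1 / (n:ℝ) ≤ F y}.Nonempty := by
    intro n hn
    have hpos : (0:ℝ) < 1 / (n:ℝ) := by
        have : (0:ℝ) < (n:ℝ) := by exact_mod_cast hn
        positivity
    obtain ⟨y, hy⟩ := (hGtend.eventually_lt_const hpos).exists
    exact ⟨y, by simp only [Set.mem_setOf_eq]; linarith⟩
  have halower : ∀ M : ℝ, ∀ᶠ n : ℕ in atTop, ∀ y : ℝ, 1 - 1 / (n:ℝ) ≤ F y → M ≤ y := by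
    intro M
    have h1 : Tendsto (fun n : ℕ => 1 / (n:ℝ)) atTop (nhds 0) := tendsto_one_div_atTop_nhds_zero_nat
    have h2 : (0:ℝ) < 1 - F M := by linarith [hFlt1 M]
    filter_upwards [h1.eventually_lt_const h2] with n hn y hy
    by_contra hyM
    push_neg at hyM
    have := hFmono hyM.le
    linarith
  have haM : ∀ M : ℝ, ∀ᶠ n : ℕ in atTop, M ≤ a n := by
    intro M
    filter_upwards [halower M, eventually_ge_atTop 1] with n hn hn1
    rw [ha]
    exact le_csInf (hanonempty n hn1) hn
  have hGa : ∀ᶠ n : ℕ in atTop, 1 - F (a n) ≤ 1 / (n:ℝ) := by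
    filter_upwards [halower 0, eventually_ge_atTop 1] with n hlb hn1
    have hbdd : BddBelow {y : ℝ | 1 - 1 / (n:ℝ) ≤ F y} := ⟨0, fun y hy => hlb y hy⟩
    have hstep1 : ∀ ε : ℝ, 0 < ε → 1 - 1 / (n:ℝ) ≤ F (a n + ε) := by
      intro ε hε
      have hlt : sInf {y : ℝ | 1 - 1 / (n:ℝ) ≤ F y} < a n + ε := by
        rw [← ha]; linarith
      obtain ⟨y, hy, hy2⟩ := (csInf_lt_iff hbdd (hanonempty n hn1)).1 hlt
      exact le_trans hy (hFmono hy2.le)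
    have hseteq : {ω | X 0 ω ≤ a n} = ⋂ k : ℕ, {ω | X 0 ω ≤ a n + 1/((k:ℝ)+1)} := by
      ext ω
      simp only [Set.mem_setOf_eq, Set.mem_iInter]
      constructor
      · intro h k
        have : (0:ℝ) < 1/((k:ℝ)+1) := by positivity
        linarith
      · intro h
        by_contra hcon
        push_neg at hcon
        obtain ⟨k, hk⟩ := exists_nat_one_div_lt (show (0:ℝ) < X 0 ω - a n by linarith)
        have := h k
        linarith
    have hmeas : ∀ c : ℝ, MeasurableSet {ω | X 0 ω ≤ c} := by
      intro c
      exact (hX_meas 0) measurableSet_Iic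
    have htend := tendsto_measure_iInter_atTop
      (s := fun k : ℕ => {ω | X 0 ω ≤ a n + 1/((k:ℝ)+1)})
      (fun k => (hmeas _).nullMeasurableSet)
      (fun k l hkl => by
        intro ω hω
        simp only [Set.mem_setOf_eq] at *
        have h1 : 1/((l:ℝ)+1) ≤ 1/((k:ℝ)+1) := by
          apply one_div_le_one_div_of_le (by positivity)
          have : (k:ℝ) ≤ (l:ℝ) := by exact_mod_cast hkl
          linarith
        linarith)
      ⟨0, measure_ne_top μ _⟩
    rw [← hseteq] at htend
    have hge : ENNReal.ofReal (1 - 1/(n:ℝ)) ≤ μ {ω | X 0 ω ≤ a n} := by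
      refine ge_of_tendsto htend (Eventually.of_forall fun k => ?_)
      refine ENNReal.ofReal_le_of_le_toReal ?_
      simp only [Function.comp_apply]
      rw [← hF]
      exact hstep1 _ (by positivity)
    have hnn : (0:ℝ) ≤ 1 - 1/(n:ℝ) := by
      have h1 : (1:ℝ) ≤ (n:ℝ) := by exact_mod_cast hn1
      have := one_div_le_one_div_of_le one_pos h1
      simpa using this
    have := ENNReal.toReal_mono (measure_ne_top μ _) hge
    rw [ENNReal.toReal_ofReal hnn, ← hF] at this
    linarith
  have hloga : ∃ c₁ c₂ : ℝ, 0 ≤ c₂ ∧ ∀ᶠ n : ℕ in atTop, Real.log (a n) ≤ c₁ + c₂ * Real.log n := by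
    obtain ⟨S, hS1, hpot⟩ := potterU (α/2) (by linarith) (by linarith)
    have hSpos : (0:ℝ) < S := lt_of_lt_of_le one_pos hS1
    set γ := α - α/2 with hγdef
    have hγpos : 0 < γ := by rw [hγdef]; linarith
    set C' := 2 ^ γ * (S ^ γ * (1 - F S)) with hC'def
    have hC'pos : 0 < C' := by
      apply mul_pos (Real.rpow_pos_of_pos two_pos _)
      exact mul_pos (Real.rpow_pos_of_pos hSpos _) (hGpos S hSpos)
    refine ⟨Real.log 2 + Real.log C' / γ, 1/γ, by positivity, ?_⟩
    filter_upwards [haM (S + 2), halower 0, eventually_ge_atTop 1] with n hn hlb hn1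
    have hbdd : BddBelow {y : ℝ | 1 - 1 / (n:ℝ) ≤ F y} := ⟨0, fun y hy => hlb y hy⟩
    set y := a n - 1 with hydef
    have hyS : S ≤ y := by rw [hydef]; linarith
    have hypos : (0:ℝ) < y := lt_of_lt_of_le hSpos hyS
    have hy1 : (1:ℝ) ≤ y := le_trans hS1 hyS
    have hnotmem : y ∉ {y : ℝ | 1 - 1 / (n:ℝ) ≤ F y} := by
      apply notMem_of_lt_csInf _ hbdd
      rw [← ha]; rw [hydef]; linarith
    have hGy : 1/(n:ℝ) < 1 - F y := by
      simp only [Set.mem_setOf_eq, not_le] at hnotmem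
      linarith
    have hpoty := hpot S y le_rfl hyS
    have hrw : (2:ℝ) ^ γ * ((y/S) ^ (-γ) * (1 - F S)) = C' * y ^ (-γ) := by
      rw [Real.div_rpow hypos.le hSpos.le, Real.rpow_neg hSpos.le γ, hC'def]
      field_simp
    have h2 : 1/(n:ℝ) < C' * y ^ (-γ) := by
      rw [← hrw]; exact lt_of_lt_of_le hGy hpoty
    have hn0 : (0:ℝ) < (n:ℝ) := by exact_mod_cast hn1
    have hlog := Real.log_lt_log (by positivity) h2
    rw [Real.log_div one_ne_zero hn0.ne', Real.log_one,
      Real.log_mul hC'pos.ne' (Real.rpow_pos_of_pos hypos _).ne', Real.log_rpow hypos] at hlog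
    have hlogy : Real.log y ≤ (Real.log C' + Real.log n)/γ := by
      rw [le_div_iff₀ hγpos]
      nlinarith
    have hA : a n ≤ 2 * y := by rw [hydef]; linarith
    have hstep : Real.log (a n) ≤ Real.log 2 + Real.log y := by
      calc Real.log (a n) ≤ Real.log (2*y) := Real.log_le_log (by linarith) hA
        _ = Real.log 2 + Real.log y := Real.log_mul two_ne_zero hypos.ne'
    have hexp : (Real.log C' + Real.log n)/γ = Real.log C'/γ + (1/γ) * Real.log n := by
      field_simp
    linarith [hlogy, hexp ▸ hlogy]

  -- chunk 3 : measure bounds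
  have hmeasIic : ∀ c : ℝ, MeasurableSet {ω | X 0 ω ≤ c} := fun c => (hX_meas 0) measurableSet_Iic
  have hx0 : (0:ℝ) < x := lt_of_lt_of_le one_pos hx
  have hPn : ∀ᶠ n : ℕ in atTop,
      (μ {ω | x < Z n ω}).toReal ≤ (n:ℝ) * (1 - F (a n * x ^ (Real.log n / α))) + (F 0)^n
      ∧ 1 - F (a n * x ^ (Real.log n / α)) ≤ (μ {ω | x < Z n ω}).toReal := by
    filter_upwards [haM 1, eventually_ge_atTop 3] with n han hn3
    have hn0 : 0 < n := by omega
    have hnR : (1:ℝ) < (n:ℝ) := by exact_mod_cast (show 1 < n by omega)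
    have hlogn : 0 < Real.log n := Real.log_pos hnR
    have hp : 0 < α / Real.log n := div_pos hα hlogn
    have hapos : 0 < a n := lt_of_lt_of_le one_pos han
    set tn := a n * x ^ (Real.log n / α) with htndef
    have hxw : (1:ℝ) ≤ x ^ (Real.log n / α) := by
      simpa using Real.rpow_le_rpow_of_exponent_le hx (show (0:ℝ) ≤ Real.log n / α by positivity)
    have htn_ge : a n ≤ tn := le_mul_of_one_le_right hapos.le hxw
    have htnpos : 0 < tn := lt_of_lt_of_le hapos htn_ge
    have hxpow : (x ^ (Real.log n / α)) ^ (α / Real.log n) = x := by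
      rw [← Real.rpow_mul hx0.le]
      have he : (Real.log n / α) * (α / Real.log n) = 1 := by
        field_simp
      rw [he, Real.rpow_one]
    have hincl2 : X 0 ⁻¹' Set.Ioi tn ⊆ {ω | x < Z n ω} := by
      intro ω hω
      simp only [Set.mem_preimage, Set.mem_Ioi] at hω
      simp only [Set.mem_setOf_eq]
      rw [hZ]
      have hbdd : BddAbove (Set.range fun i : Fin n => X i ω) :=
        Set.Finite.bddAbove (Set.finite_range _)
      have hM : X 0 ω ≤ ⨆ i : Fin n, X i ω := le_ciSup hbdd (⟨0, hn0⟩ : Fin n)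
      have h1 : x ^ (Real.log n / α) < (⨆ i : Fin n, X i ω) / a n := by
        rw [lt_div_iff₀ hapos]
        calc x ^ (Real.log n / α) * a n = tn := by rw [htndef]; ring
          _ < X 0 ω := hω
          _ ≤ _ := hM
      calc x = (x ^ (Real.log n / α)) ^ (α / Real.log n) := hxpow.symm
        _ < ((⨆ i : Fin n, X i ω) / a n) ^ (α / Real.log n) :=
            Real.rpow_lt_rpow (by positivity) h1 hp
    have hincl : {ω | x < Z n ω} ⊆
        (⋃ i ∈ Finset.range n, X i ⁻¹' Set.Ioi tn) ∪ ⋂ i ∈ Finset.range n, X i ⁻¹' Set.Iic 0 := by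
      intro ω hω
      simp only [Set.mem_setOf_eq] at hω
      rw [hZ] at hω
      by_cases hA : ∃ i ∈ Finset.range n, ω ∈ X i ⁻¹' Set.Ioi tn
      · left
        obtain ⟨i, hi1, hi2⟩ := hA
        exact Set.mem_biUnion hi1 hi2
      · right
        push_neg at hA
        have hall : ∀ i : Fin n, X i ω ≤ tn := by
          intro i
          have := hA i (Finset.mem_range.2 i.isLt)
          simpa [Set.mem_preimage, Set.mem_Ioi, not_lt] using this
        have hbdd : BddAbove (Set.range fun i : Fin n => X i ω) :=
          Set.Finite.bddAbove (Set.finite_range _)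
        haveI : Nonempty (Fin n) := ⟨⟨0, hn0⟩⟩
        have hMle : (⨆ i : Fin n, X i ω) ≤ tn := ciSup_le hall
        have hMneg : (⨆ i : Fin n, X i ω) < 0 := by
          rcases lt_trichotomy (⨆ i : Fin n, X i ω) 0 with h | h | h
          · exact h
          · exfalso
            rw [h, zero_div, Real.zero_rpow hp.ne'] at hω
            linarith
          · exfalso
            have hble : (⨆ i : Fin n, X i ω) / a n ≤ x ^ (Real.log n / α) := by
              rw [div_le_iff₀ hapos]
              calc (⨆ i : Fin n, X i ω) ≤ tn := hMle
                _ = x ^ (Real.log n / α) * a n := by rw [htndef]; ring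
            have h2 : ((⨆ i : Fin n, X i ω) / a n) ^ (α / Real.log n) ≤ x := by
              calc ((⨆ i : Fin n, X i ω) / a n) ^ (α / Real.log n)
                  ≤ (x ^ (Real.log n / α)) ^ (α / Real.log n) :=
                    Real.rpow_le_rpow (by positivity) hble hp.le
                _ = x := hxpow
            linarith
        simp only [Set.mem_iInter, Set.mem_preimage, Set.mem_Iic]
        intro i hi
        have : X i ω ≤ ⨆ j : Fin n, X j ω :=
          le_ciSup hbdd (⟨i, Finset.mem_range.1 hi⟩ : Fin n)
        linarith
    have hmeasIoi : ∀ i : ℕ, μ (X i ⁻¹' Set.Ioi tn) = μ (X 0 ⁻¹' Set.Ioi tn) := fun i =>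
      (hX_ident i).measure_mem_eq measurableSet_Ioi
    have hmeasIic' : ∀ i : ℕ, μ (X i ⁻¹' Set.Iic 0) = μ (X 0 ⁻¹' Set.Iic 0) := fun i =>
      (hX_ident i).measure_mem_eq measurableSet_Iic
    have hBeq : μ (⋂ i ∈ Finset.range n, X i ⁻¹' Set.Iic 0) = (μ (X 0 ⁻¹' Set.Iic 0))^n := by
      rw [hX_indep.meas_biInter (fun i _ => ⟨Set.Iic 0, measurableSet_Iic, rfl⟩)]
      rw [Finset.prod_congr rfl (fun i _ => hmeasIic' i), Finset.prod_const, Finset.card_range]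
    have hmain : μ {ω | x < Z n ω} ≤
        (n : ENNReal) * μ (X 0 ⁻¹' Set.Ioi tn) + (μ (X 0 ⁻¹' Set.Iic 0))^n := by
      calc μ {ω | x < Z n ω}
          ≤ μ ((⋃ i ∈ Finset.range n, X i ⁻¹' Set.Ioi tn) ∪
              ⋂ i ∈ Finset.range n, X i ⁻¹' Set.Iic 0) := measure_mono hincl
        _ ≤ μ (⋃ i ∈ Finset.range n, X i ⁻¹' Set.Ioi tn) +
              μ (⋂ i ∈ Finset.range n, X i ⁻¹' Set.Iic 0) := measure_union_le _ _
        _ ≤ (∑ i ∈ Finset.range n, μ (X i ⁻¹' Set.Ioi tn)) +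
              μ (⋂ i ∈ Finset.range n, X i ⁻¹' Set.Iic 0) :=
            add_le_add (measure_biUnion_finset_le _ _) le_rfl
        _ = (n : ENNReal) * μ (X 0 ⁻¹' Set.Ioi tn) + (μ (X 0 ⁻¹' Set.Iic 0))^n := by
            rw [hBeq, Finset.sum_congr rfl (fun i _ => hmeasIoi i), Finset.sum_const,
              Finset.card_range, nsmul_eq_mul]
    have hIoiR : (μ (X 0 ⁻¹' Set.Ioi tn)).toReal = 1 - F tn := by
      have hc : X 0 ⁻¹' Set.Ioi tn = {ω | X 0 ω ≤ tn}ᶜ := by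
        ext ω; simp [Set.mem_preimage, not_le]
      rw [hc, prob_compl_eq_one_sub (hmeasIic tn),
        ENNReal.toReal_sub_of_le prob_le_one ENNReal.one_ne_top, ← hF]
      simp
    have hIicR : (μ (X 0 ⁻¹' Set.Iic 0)).toReal = F 0 := by
      rw [hF]
      rfl
    constructor
    · have hfin : (n : ENNReal) * μ (X 0 ⁻¹' Set.Ioi tn) + (μ (X 0 ⁻¹' Set.Iic 0))^n ≠ ⊤ :=
        ENNReal.add_ne_top.2 ⟨ENNReal.mul_ne_top (ENNReal.natCast_ne_top n) (measure_ne_top μ _),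
          ENNReal.pow_ne_top (measure_ne_top μ _)⟩
      have := ENNReal.toReal_mono hfin hmain
      rwa [ENNReal.toReal_add (ENNReal.mul_ne_top (ENNReal.natCast_ne_top n) (measure_ne_top μ _))
        (ENNReal.pow_ne_top (measure_ne_top μ _)), ENNReal.toReal_mul, ENNReal.toReal_pow,
        ENNReal.toReal_natCast, hIoiR, hIicR] at this
    · have := ENNReal.toReal_mono (measure_ne_top μ _) (measure_mono hincl2)
      rwa [hIoiR] at this

  -- chunk 4 : conclusion
  set f : ℕ → ℝ := fun n => Real.log (μ {ω | x < Z n ω}).toReal / Real.log n with hfdef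
  have hlogn_tend : Tendsto (fun n : ℕ => Real.log n) atTop atTop :=
    Real.tendsto_log_atTop.comp tendsto_natCast_atTop_atTop
  have hlogx : 0 ≤ Real.log x := Real.log_nonneg hx
  -- lower bound (coboundedness)
  obtain ⟨S₂, hS₂1, hpotL⟩ := potterL
  obtain ⟨c₁, c₂, hc₂, hlog_a⟩ := hloga
  have hS₂pos : (0:ℝ) < S₂ := lt_of_lt_of_le one_pos hS₂1
  have hGS₂pos : 0 < 1 - F S₂ := hGpos S₂ hS₂pos
  set γ' : ℝ := α + 1 with hγ'def
  have hγ'pos : 0 < γ' := by rw [hγ'def]; linarith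
  set E : ℝ := (-γ') * Real.log 2 + Real.log (1 - F S₂) + γ' * Real.log S₂ - γ' * c₁ with hEdef
  set D : ℝ := γ' * (c₂ + Real.log x / α) with hDdef
  have hDnn : 0 ≤ D := by
    rw [hDdef]
    apply mul_nonneg hγ'pos.le
    have : 0 ≤ Real.log x / α := by positivity
    linarith
  have hlowerbd : ∀ᶠ n : ℕ in atTop, -(|E| + D) ≤ f n := by
    filter_upwards [hPn, haM (max S₂ 1), hlog_a, hlogn_tend.eventually_ge_atTop 1,
      eventually_ge_atTop 3] with n hPn' hanS hlan hln1 hn3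
    obtain ⟨hup, hlow⟩ := hPn'
    have hlognpos : (0:ℝ) < Real.log n := lt_of_lt_of_le one_pos hln1
    have hapos : 0 < a n := lt_of_lt_of_le one_pos (le_trans (le_max_right _ _) hanS)
    set tn := a n * x ^ (Real.log n / α) with htndef
    have hxw : (1:ℝ) ≤ x ^ (Real.log n / α) := by
      simpa using Real.rpow_le_rpow_of_exponent_le hx
        (show (0:ℝ) ≤ Real.log n / α by positivity)
    have htn_ge : a n ≤ tn := le_mul_of_one_le_right hapos.le hxw
    have htnpos : 0 < tn := lt_of_lt_of_le hapos htn_ge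
    have htnS₂ : S₂ ≤ tn := le_trans (le_trans (le_max_left _ _) hanS) htn_ge
    have hGtnpos : 0 < 1 - F tn := hGpos tn htnpos
    have hPpos : 0 < (μ {ω | x < Z n ω}).toReal := lt_of_lt_of_le hGtnpos hlow
    have hlog1 : Real.log (1 - F tn) ≤ Real.log (μ {ω | x < Z n ω}).toReal :=
      Real.log_le_log hGtnpos hlow
    have hpl := hpotL tn htnS₂
    have hLHSpos : 0 < (2:ℝ) ^ (-γ') * ((tn/S₂) ^ (-γ') * (1 - F S₂)) := by
      apply mul_pos (Real.rpow_pos_of_pos two_pos _)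
      exact mul_pos (Real.rpow_pos_of_pos (div_pos htnpos hS₂pos) _) hGS₂pos
    have hlog2 := Real.log_le_log hLHSpos hpl
    rw [Real.log_mul (Real.rpow_pos_of_pos two_pos _).ne'
        (mul_pos (Real.rpow_pos_of_pos (div_pos htnpos hS₂pos) _) hGS₂pos).ne',
      Real.log_mul (Real.rpow_pos_of_pos (div_pos htnpos hS₂pos) _).ne' hGS₂pos.ne',
      Real.log_rpow two_pos, Real.log_rpow (div_pos htnpos hS₂pos),
      Real.log_div htnpos.ne' hS₂pos.ne'] at hlog2
    have hlogtn : Real.log tn = Real.log (a n) + (Real.log n / α) * Real.log x := by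
      rw [htndef, Real.log_mul hapos.ne' (Real.rpow_pos_of_pos hx0 _).ne',
        Real.log_rpow hx0]
    have h4 : Real.log tn ≤ c₁ + (c₂ + Real.log x / α) * Real.log n := by
      rw [hlogtn]
      have h5 : (Real.log n / α) * Real.log x = (Real.log x / α) * Real.log n := by ring
      rw [h5]
      linarith
    have h6 : E - D * Real.log n ≤ Real.log (μ {ω | x < Z n ω}).toReal := by
      clear_value E D γ' tn
      have h7 := mul_le_mul_of_nonneg_left h4 hγ'pos.le
      have e1 : E - D * Real.log n = (-γ') * Real.log 2 + Real.log (1 - F S₂)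
          + γ' * Real.log S₂ - γ' * c₁ - γ' * ((c₂ + Real.log x / α) * Real.log n) := by
        rw [hEdef, hDdef]; ring
      have e2 : (-γ') * Real.log 2 + ((-γ') * (Real.log tn - Real.log S₂) + Real.log (1 - F S₂))
          = (-γ') * Real.log 2 + Real.log (1 - F S₂) + γ' * Real.log S₂ - γ' * Real.log tn := by
        ring
      have e3 : γ' * (c₁ + (c₂ + Real.log x / α) * Real.log n)
          = γ' * c₁ + γ' * ((c₂ + Real.log x / α) * Real.log n) := by ring
      rw [e1]
      rw [e2] at hlog2
      rw [e3] at h7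
      linarith only [hlog1, hlog2, h7]
    have h8 : (E - D * Real.log n) / Real.log n ≤ f n := by
      rw [hfdef]
      exact (div_le_div_iff_of_pos_right hlognpos).2 h6
    have h9 : (E - D * Real.log n) / Real.log n = E / Real.log n - D := by
      rw [sub_div, mul_div_cancel_right₀ _ hlognpos.ne']
    have h10 : -|E| ≤ E / Real.log n := by
      rcases le_or_gt 0 E with hE | hE
      · have : 0 ≤ E / Real.log n := div_nonneg hE hlognpos.le
        linarith [abs_nonneg E]
      · have h11 : E ≤ E / Real.log n := by
          rw [le_div_iff₀ hlognpos]
          have h12 : E * Real.log n ≤ E * 1 := mul_le_mul_of_nonpos_left hln1 hE.le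
          linarith only [h12]
        linarith [neg_abs_le E]
    rw [h9] at h8
    linarith
  -- upper bound
  have hupper : ∀ δ : ℝ, 0 < δ → ∀ᶠ n : ℕ in atTop, f n ≤ -Real.log x + δ := by
    intro δ hδ
    set ε := min (α/2) (α*δ/(2*(Real.log x + 1))) with hεdef
    have hεpos : 0 < ε := lt_min (by linarith) (by positivity)
    have hεα : ε < α := lt_of_le_of_lt (min_le_left _ _) (by linarith)
    have hεx : (ε/α) * Real.log x ≤ δ/2 := by
      have h1 : ε ≤ α*δ/(2*(Real.log x + 1)) := min_le_right _ _
      have h2 : ε * (2*(Real.log x + 1)) ≤ α*δ := by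
        rw [← le_div_iff₀ (by positivity)]
        exact h1
      rw [div_mul_eq_mul_div, div_le_div_iff₀ hα (by norm_num)]
      nlinarith
    obtain ⟨S, hS1, hpot⟩ := potterU ε hεpos hεα
    set γ := α - ε with hγdef
    have hγpos : 0 < γ := by rw [hγdef]; linarith
    set C := (2:ℝ) ^ γ with hCdef
    have hC1 : 1 < C := by
      rw [hCdef]
      exact (Real.one_lt_rpow_iff_of_pos two_pos).2 (Or.inl ⟨one_lt_two, hγpos⟩)
    have hCpos : 0 < C := lt_trans one_pos hC1
    set β := (γ/α) * Real.log x with hβdef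
    have hβnn : 0 ≤ β := mul_nonneg (div_nonneg hγpos.le hα.le) hlogx
    set q := max (F 0) (1/2 : ℝ) with hqdef
    have hqpos : (0:ℝ) < q := lt_of_lt_of_le one_half_pos (le_max_right _ _)
    have hq1 : q < 1 := max_lt (hFlt1 0) (by norm_num)
    have hlogq : Real.log q < 0 := Real.log_neg hqpos hq1
    set c := -Real.log q with hcdef
    have hcpos : 0 < c := by rw [hcdef]; linarith
    set A := Real.log 2 + Real.log C with hAdef
    filter_upwards [hPn, haM (max S 1), hGa, eventually_ge_atTop 3,
      (tendsto_natCast_atTop_atTop (R := ℝ)).eventually_ge_atTop (((2*β+1)/c)^2),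
      (tendsto_natCast_atTop_atTop (R := ℝ)).eventually_ge_atTop (1:ℝ),
      hlogn_tend.eventually_ge_atTop (2*(|A|+1)/δ),
      hlogn_tend.eventually_ge_atTop 1] with n hPn' hanS hGan hn3 hsq hn1 hlA hln1
    obtain ⟨hup, hlow⟩ := hPn'
    have hlognpos : (0:ℝ) < Real.log n := lt_of_lt_of_le one_pos hln1
    have hapos : 0 < a n := lt_of_lt_of_le one_pos (le_trans (le_max_right _ _) hanS)
    set tn := a n * x ^ (Real.log n / α) with htndef
    have hxw : (1:ℝ) ≤ x ^ (Real.log n / α) := by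
      simpa using Real.rpow_le_rpow_of_exponent_le hx
        (show (0:ℝ) ≤ Real.log n / α by positivity)
    have htn_ge : a n ≤ tn := le_mul_of_one_le_right hapos.le hxw
    have htnpos : 0 < tn := lt_of_lt_of_le hapos htn_ge
    have hGtnpos : 0 < 1 - F tn := hGpos tn htnpos
    have hPpos : 0 < (μ {ω | x < Z n ω}).toReal := lt_of_lt_of_le hGtnpos hlow
    have hw : tn / a n = x ^ (Real.log n / α) := by
      rw [htndef, mul_div_cancel_left₀ _ hapos.ne']
    have hwpow : (x ^ (Real.log n / α)) ^ (-γ) = Real.exp (-(β * Real.log n)) := by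
      rw [← Real.rpow_mul hx0.le, Real.rpow_def_of_pos hx0]
      congr 1
      rw [hβdef]
      ring
    have hGan' : 1 - F (a n) ≤ 1/(n:ℝ) := hGan
    have hn0R : (0:ℝ) < (n:ℝ) := lt_of_lt_of_le one_pos hn1
    have h1 : 1 - F tn ≤ C * (Real.exp (-(β * Real.log n)) * (1/(n:ℝ))) := by
      have hh := hpot (a n) tn (le_trans (le_max_left _ _) hanS) htn_ge
      rw [hw, hwpow] at hh
      refine le_trans hh ?_
      apply mul_le_mul_of_nonneg_left _ hCpos.le
      exact mul_le_mul_of_nonneg_left hGan' (Real.exp_pos _).le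
    have h2 : (n:ℝ) * (1 - F tn) ≤ C * Real.exp (-(β * Real.log n)) := by
      have h3 := mul_le_mul_of_nonneg_left h1 hn0R.le
      have heq : (n:ℝ) * (C * (Real.exp (-(β * Real.log n)) * (1/(n:ℝ))))
          = C * Real.exp (-(β * Real.log n)) := by
        field_simp
      linarith [heq ▸ h3]
    have hsqrt : (2*β+1)/c ≤ Real.sqrt n := by
      rw [← Real.sqrt_sq (by positivity : (0:ℝ) ≤ (2*β+1)/c)]
      exact Real.sqrt_le_sqrt hsq
    have hqn : (F 0)^n ≤ C * Real.exp (-(β * Real.log n)) := by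
      have hq2 : (F 0)^n ≤ q^n := pow_le_pow_left₀ (hFnn 0) (le_max_left _ _) n
      have hq3 : q^n = Real.exp ((n:ℝ) * Real.log q) := by
        rw [Real.exp_nat_mul, Real.exp_log hqpos]
      have hlog_sqrt : Real.log n ≤ 2 * Real.sqrt n := log_le_two_sqrt hn1
      have hs0 : 0 ≤ Real.sqrt (n:ℝ) := Real.sqrt_nonneg _
      have hsql : c * Real.sqrt n ≥ 2*β+1 := by
        rw [ge_iff_le, ← div_le_iff₀' hcpos]
        exact hsqrt
      have hss : Real.sqrt n * Real.sqrt n = (n:ℝ) := Real.mul_self_sqrt (by positivity)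
      have hkey : (n:ℝ) * Real.log q + β * Real.log n ≤ Real.log C := by
        have hβs : β * Real.log n ≤ 2*β*Real.sqrt n := by
          have h20 := mul_le_mul_of_nonneg_left hlog_sqrt hβnn
          linarith only [h20]
        have hcn : (2*β+1) * Real.sqrt n ≤ c * (n:ℝ) := by
          calc (2*β+1) * Real.sqrt n ≤ (c * Real.sqrt n) * Real.sqrt n :=
                mul_le_mul_of_nonneg_right hsql hs0
            _ = c * (n:ℝ) := by rw [mul_assoc, hss]
        have hClog : 0 < Real.log C := Real.log_pos hC1
        have e4 : (n:ℝ) * Real.log q = -(c * (n:ℝ)) := by rw [hcdef]; ring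
        linarith only [hβs, hcn, hClog, e4, hs0]
      calc (F 0)^n ≤ q^n := hq2
        _ = Real.exp ((n:ℝ) * Real.log q) := hq3
        _ ≤ Real.exp (Real.log C - β * Real.log n) := by
            apply Real.exp_le_exp.2
            linarith
        _ = C * Real.exp (-(β * Real.log n)) := by
            have e5 : Real.log C - β * Real.log (n:ℝ) = Real.log C + -(β * Real.log (n:ℝ)) := by
              ring
            rw [e5, Real.exp_add, Real.exp_log hCpos]
    have hPle : (μ {ω | x < Z n ω}).toReal ≤ 2 * C * Real.exp (-(β * Real.log n)) := by
      calc (μ {ω | x < Z n ω}).toReal ≤ (n:ℝ) * (1 - F tn) + (F 0)^n := hup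
        _ ≤ C * Real.exp (-(β * Real.log n)) + C * Real.exp (-(β * Real.log n)) :=
            add_le_add h2 hqn
        _ = 2 * C * Real.exp (-(β * Real.log n)) := by ring
    have hexp_eq : 2 * C * Real.exp (-(β * Real.log n))
        = Real.exp (Real.log 2 + Real.log C + -(β * Real.log n)) := by
      rw [Real.exp_add, Real.exp_add, Real.exp_log two_pos, Real.exp_log hCpos]
    have hlogP : Real.log (μ {ω | x < Z n ω}).toReal ≤ A - β * Real.log n := by
      have := Real.log_le_log hPpos hPle
      rw [hexp_eq, Real.log_exp, ← hAdef] at this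
      linarith
    have hfin : f n ≤ A / Real.log n - β := by
      have h12 : (A - β * Real.log n) / Real.log n = A / Real.log n - β := by
        rw [sub_div, mul_div_cancel_right₀ _ hlognpos.ne']
      rw [hfdef, ← h12]
      exact (div_le_div_iff_of_pos_right hlognpos).2 hlogP
    have hAd : A / Real.log n ≤ δ/2 := by
      clear_value A
      rw [div_le_iff₀ hlognpos]
      have h13 : (δ/2) * (2*(|A|+1)/δ) ≤ (δ/2) * Real.log n :=
        mul_le_mul_of_nonneg_left hlA (by linarith)
      have h14 : (δ/2) * (2*(|A|+1)/δ) = |A| + 1 := by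
        field_simp
      linarith only [h13, h14, le_abs_self A]
    have hβlow : Real.log x - δ/2 ≤ β := by
      rw [hβdef, hγdef]
      have : ((α - ε)/α) * Real.log x = Real.log x - (ε/α) * Real.log x := by
        field_simp
      rw [this]
      linarith
    clear_value f β A
    linarith only [hfin, hAd, hβlow]
  -- conclusion
  have hcb : IsCoboundedUnder (· ≤ ·) atTop f :=
    isCoboundedUnder_le_of_eventually_le atTop (x := -(|E| + D)) hlowerbd
  by_contra hcon
  push_neg at hcon
  set δ := (limsup f atTop - (-Real.log x))/2 with hδdef
  have hδpos : 0 < δ := by rw [hδdef]; linarith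
  have := limsup_le_of_le hcb ((hupper δ hδpos).mono fun n h => h)
  rw [hδdef] at this
  linarith
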